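/- If ρ : (a,b) → ℝ is positive and satisfies the ODE 3ρρ'' = 1 + (ρ')², then there exists a positive constant C such that (ρ')² = Cρ^(2/3) − 1 on (a,b). -/

import Mathlib

/-- Auxiliary: a function with zero derivative on an open interval is constant there. -/
lemma const_of_deriv_zero_Ioo {a b : ℝ} {g : ℝ → ℝ}
    (hg : ∀ u ∈ Set.Ioo a b, HasDerivAt g 0 u) :
    ∀ x ∈ Set.Ioo a b, ∀ y ∈ Set.Ioo a b, g x = g y := by
  intro x hx y hy
  have hdiff : DifferentiableOn ℝ g (Set.Ioo a b) := fun u hu =>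
    (hg u hu).differentiableAt.differentiableWithinAt
  refine (convex_Ioo a b).is_const_of_fderivWithin_eq_zero hdiff (fun u hu => ?_) hx hy
  have h1 : fderivWithin ℝ g (Set.Ioo a b) u = fderiv ℝ g u :=
    fderivWithin_of_isOpen isOpen_Ioo hu
  rw [h1, (hg u hu).hasFDerivAt.fderiv]
  ext
  simp


/-- If ρ : (a,b) → ℝ is positive and satisfies the ODE 3ρρ'' = 1 + (ρ')²,
then there exists a positive constant C such that (ρ')² = Cρ^(2/3) − 1 on (a,b). -/
theorem stmt_0 (a b : ℝ) (ρ : ℝ → ℝ)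
    (hpos : ∀ u ∈ Set.Ioo a b, 0 < ρ u)
    (hdiff : ∀ u ∈ Set.Ioo a b, DifferentiableAt ℝ ρ u ∧ DifferentiableAt ℝ (deriv ρ) u)
    (hode : ∀ u ∈ Set.Ioo a b, 3 * ρ u * deriv (deriv ρ) u = 1 + (deriv ρ u) ^ 2) :
    ∃ C : ℝ, 0 < C ∧ ∀ u ∈ Set.Ioo a b,
      (deriv ρ u) ^ 2 = C * (ρ u) ^ ((2 : ℝ) / 3) - 1 := by
  rcases Set.eq_empty_or_nonempty (Set.Ioo a b) with hS | ⟨x0, hx0⟩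
  · exact ⟨1, one_pos, fun u hu => absurd hu (by rw [hS]; exact Set.notMem_empty u)⟩
  set g : ℝ → ℝ := fun u => (1 + (deriv ρ u) ^ 2) / (ρ u) ^ ((2 : ℝ) / 3) with hg
  have key : ∀ u ∈ Set.Ioo a b, HasDerivAt g 0 u := by
    intro u hu
    obtain ⟨h1, h2⟩ := hdiff u hu
    have hρ : 0 < ρ u := hpos u hu
    have hnum : HasDerivAt (fun x => 1 + (deriv ρ x) ^ 2)
        (2 * deriv ρ u * deriv (deriv ρ) u) u := by
      have := ((h2.hasDerivAt.pow 2))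
      simpa [mul_comm, mul_assoc, mul_left_comm] using
        this.const_add 1
    have hden : HasDerivAt (fun x => (ρ x) ^ ((2 : ℝ) / 3))
        (deriv ρ u * ((2:ℝ)/3) * (ρ u) ^ ((2:ℝ)/3 - 1)) u :=
      h1.hasDerivAt.rpow_const (Or.inl hρ.ne')
    have hden0 : (ρ u) ^ ((2 : ℝ) / 3) ≠ 0 := (Real.rpow_pos_of_pos hρ _).ne'
    have hq := hnum.div hden hden0
    refine hq.congr_deriv ?_
    rw [div_eq_zero_iff]
    left
    have hdd : deriv (deriv ρ) u = (1 + (deriv ρ u) ^ 2) / (3 * ρ u) := by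
      field_simp
      linarith [hode u hu]
    rw [hdd]
    have hsplit : (ρ u) ^ ((2:ℝ)/3 - 1) = (ρ u) ^ ((2:ℝ)/3) / ρ u := by
      rw [Real.rpow_sub hρ, Real.rpow_one]
    rw [hsplit]
    field_simp
    ring
  have hconst := const_of_deriv_zero_Ioo key
  set C := g x0 with hC
  have hCpos : 0 < C := by
    have h1 : 0 < 1 + (deriv ρ x0) ^ 2 := by positivity
    exact div_pos h1 (Real.rpow_pos_of_pos (hpos x0 hx0) _)
  refine ⟨C, hCpos, fun u hu => ?_⟩
  have hgu : g u = C := hconst u hu x0 hx0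
  have hρ : 0 < ρ u := hpos u hu
  have hden0 : (ρ u) ^ ((2 : ℝ) / 3) ≠ 0 := (Real.rpow_pos_of_pos hρ _).ne'
  have : (1 + (deriv ρ u) ^ 2) / (ρ u) ^ ((2 : ℝ) / 3) = C := hgu
  field_simp at this
  linarith
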